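/- Let n ≥ 2 and let F be an F-matrix of size 2n−2. Then every row of the associated E-matrix sums to 1; that is, for each 0 ≤ i ≤ 2n−3, the sum over j = 0, …, i of E_{i,j} equals 1. -/
import Mathlib


/-- An **F**-matrix of size `2n-2` (for a fully heterochronous ranked tree shape with
`n` leaves), modeled as a function `ℤ → ℤ → ℤ` of nonnegative integer entries that
vanishes outside the index range `0 ≤ j ≤ i ≤ 2n-3`. -/
structure IsFMatrix (n : ℕ) (F : ℤ → ℤ → ℤ) : Prop where
  nonneg : ∀ i j : ℤ, 0 ≤ F i j
  zero_outside : ∀ i j : ℤ, j < 0 ∨ i < j ∨ 2 * (n : ℤ) - 3 < i → F i j = 0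
  row_mono : ∀ i j : ℤ, 1 ≤ j → j ≤ i → i ≤ 2 * (n : ℤ) - 3 → F i (j - 1) ≤ F i j
  col_lb : ∀ i j : ℤ, 0 ≤ j → j < i → i ≤ 2 * (n : ℤ) - 3 → F (i - 1) j - 1 ≤ F i j
  col_ub : ∀ i j : ℤ, 0 ≤ j → j < i → i ≤ 2 * (n : ℤ) - 3 → F i j ≤ F (i - 1) j
  diag_pos : ∀ i : ℤ, 0 ≤ i → i ≤ 2 * (n : ℤ) - 3 → 0 < F i i
  diag_first : F 0 0 = 2
  diag_step : ∀ i : ℤ, 0 < i → i < 2 * (n : ℤ) - 3 →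
      F i i = F (i - 1) (i - 1) + 1 ∨ F i i = F (i - 1) (i - 1) - 1
  diag_last : F (2 * (n : ℤ) - 3) (2 * (n : ℤ) - 3) = 1
  subdiag : ∀ i : ℤ, 1 ≤ i → i ≤ 2 * (n : ℤ) - 3 → F i (i - 1) = F (i - 1) (i - 1) - 1
  inner_lb : ∀ i j : ℤ, 2 ≤ i → i ≤ 2 * (n : ℤ) - 3 → 1 ≤ j → j ≤ i - 2 →
      F i (j - 1) + F (i - 1) j - F (i - 1) (j - 1) - 1 ≤ F i j
  inner_ub : ∀ i j : ℤ, 2 ≤ i → i ≤ 2 * (n : ℤ) - 3 → 1 ≤ j → j ≤ i - 2 →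
      F i j ≤ F i (j - 1) + F (i - 1) j - F (i - 1) (j - 1)

/-- The **D**-matrix associated to an **F**-matrix: `D i j = F i j - F i (j-1)`. -/
def Dmat (F : ℤ → ℤ → ℤ) (i j : ℤ) : ℤ := F i j - F i (j - 1)

/-- The **E**-matrix associated to an **F**-matrix: `E i j = D i j - D (i+1) j`. -/
def Emat (F : ℤ → ℤ → ℤ) (i j : ℤ) : ℤ := Dmat F i j - Dmat F (i + 1) j


lemma tele_sum (g : ℤ → ℤ) (i : ℤ) (hi : 0 ≤ i) :
    ∑ j ∈ Finset.Icc (0 : ℤ) i, (g j - g (j - 1)) = g i - g (-1) := by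
  obtain ⟨m, rfl⟩ := Int.eq_ofNat_of_zero_le hi
  induction m with
  | zero => simp
  | succ k ih =>
    have hcast : ((k + 1 : ℕ) : ℤ) = (k : ℤ) + 1 := by push_cast; ring
    have hins : Finset.Icc (0:ℤ) ((k:ℤ) + 1) = insert ((k:ℤ)+1) (Finset.Icc (0:ℤ) (k:ℤ)) := by
      ext x; simp only [Finset.mem_Icc, Finset.mem_insert]; omega
    rw [hcast, hins, Finset.sum_insert (by simp), ih (by positivity)]
    ring

/-- every row of the E-matrix associated to an F-matrix sums to 1. -/
theorem emat_row_sum_one (n : ℕ) (hn : 2 ≤ n) (F : ℤ → ℤ → ℤ)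
    (hF : IsFMatrix n F) :
    ∀ i : ℤ, 0 ≤ i → i ≤ 2 * (n : ℤ) - 3 →
      ∑ j ∈ Finset.Icc (0 : ℤ) i, Emat F i j = 1 := by
  intro i hi hi2
  have tele : ∀ r : ℤ, ∑ j ∈ Finset.Icc (0 : ℤ) i, Dmat F r j = F r i - F r (-1) := by
    intro r
    simpa [Dmat] using tele_sum (F r) i hi
  have hsum : ∑ j ∈ Finset.Icc (0 : ℤ) i, Emat F i j
      = (F i i - F i (-1)) - (F (i+1) i - F (i+1) (-1)) := by
    simp only [Emat, Finset.sum_sub_distrib, tele]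
  have hz1 : F i (-1) = 0 := hF.zero_outside i (-1) (by omega)
  have hz2 : F (i+1) (-1) = 0 := hF.zero_outside (i+1) (-1) (by omega)
  rcases eq_or_lt_of_le hi2 with heq | hlt
  · have hz3 : F (i+1) i = 0 := hF.zero_outside (i+1) i (by omega)
    rw [hsum, hz1, hz2, hz3, heq, hF.diag_last]; ring
  · have hsub := hF.subdiag (i+1) (by omega) (by omega)
    simp only [add_sub_cancel_right] at hsub
    rw [hsum, hz1, hz2, hsub]; ring
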